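/- Let Im τ > 0, Im σ > 0, and define the elliptic gamma function Γ(z,τ,σ) = ∏_{j,k=0}^∞ (1 − e^{2πi((j+1)τ + (k+1)σ − z)}) / (1 − e^{2πi(jτ + kσ + z)}), defined at z where no denominator factor vanishes. Then Γ satisfies the difference equation Γ(z + τ, τ, σ) = θ₀(z, σ) · Γ(z, τ, σ), where θ₀(z,σ) = ∏_{j=0}^∞ (1 − e^{2πi((j+1)σ − z)})(1 − e^{2πi(jσ + z)}). -/

import Mathlib

noncomputable section
open Complex

/-- The theta function `θ₀(z,τ)`. -/
def theta0 (z τ : ℂ) : ℂ :=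
  ∏' j : ℕ, (1 - Complex.exp (2 * Real.pi * Complex.I * (((j : ℂ) + 1) * τ - z))) *
    (1 - Complex.exp (2 * Real.pi * Complex.I * ((j : ℂ) * τ + z)))

/-- The elliptic gamma function `Γ(z,τ,σ)`. -/
def ellipticGamma (z τ σ : ℂ) : ℂ :=
  ∏' p : ℕ × ℕ,
    (1 - Complex.exp (2 * Real.pi * Complex.I *
        (((p.1 : ℂ) + 1) * τ + ((p.2 : ℂ) + 1) * σ - z))) /
    (1 - Complex.exp (2 * Real.pi * Complex.I *
        ((p.1 : ℂ) * τ + (p.2 : ℂ) * σ + z)))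

/-- An infinite product with a zero factor is zero. -/
lemma EG.tprod_eq_zero {ι : Type*} (f : ι → ℂ) (i₀ : ι) (h : f i₀ = 0) : ∏' i, f i = 0 := by
  have hp : HasProd f 0 := by
    rw [HasProd]
    refine Filter.Tendsto.congr' ?_ tendsto_const_nhds
    filter_upwards [Filter.eventually_ge_atTop {i₀}] with s hs
    exact (Finset.prod_eq_zero (hs (Finset.mem_singleton_self i₀)) h).symm
  exact hp.tprod_eq

lemma EG.mult_aux {ι : Type*} (F w : ι → ℂ) (hFw : ∀ i, F i = 1 + w i)
    (hw : Summable fun i => ‖w i‖) (h0 : ∀ i, F i ≠ 0) : Multipliable F := by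
  have hsm : ∀ᶠ i in Filter.cofinite, ‖w i‖ ≤ 1 / 2 :=
    hw.tendsto_cofinite_zero.eventually_le_const (by norm_num)
  have hlog : Summable fun i => Complex.log (F i) := by
    apply Summable.of_norm_bounded_eventually (g := fun i => 3 / 2 * ‖w i‖) (hw.mul_left _)
    filter_upwards [hsm] with i hi
    rw [hFw i]
    exact Complex.norm_log_one_add_half_le_self hi
  exact Complex.multipliable_of_summable_log hlog

lemma EG.mult_aux_inv {ι : Type*} (F w : ι → ℂ) (hFw : ∀ i, F i = 1 + w i)
    (hw : Summable fun i => ‖w i‖) (h0 : ∀ i, F i ≠ 0) :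
    Multipliable fun i => (F i)⁻¹ := by
  have hsm : ∀ᶠ i in Filter.cofinite, ‖w i‖ ≤ 1 / 2 :=
    hw.tendsto_cofinite_zero.eventually_le_const (by norm_num)
  refine EG.mult_aux _ (fun i => (F i)⁻¹ - 1) (fun i => by ring) ?_
    (fun i => inv_ne_zero (h0 i))
  apply Summable.of_norm_bounded_eventually (g := fun i => 2 * ‖w i‖) (hw.mul_left _)
  filter_upwards [hsm] with i hi
  have hFn : 1 / 2 ≤ ‖F i‖ := by
    have h1 := norm_sub_norm_le (1 : ℂ) (-w i)
    rw [sub_neg_eq_add] at h1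
    rw [hFw i]
    simp only [norm_neg, norm_one] at h1
    linarith
  have hFpos : (0 : ℝ) < ‖F i‖ := by linarith
  have key : (F i)⁻¹ - 1 = -w i / F i := by
    rw [eq_div_iff (h0 i), sub_mul, inv_mul_cancel₀ (h0 i), hFw i]
    ring
  rw [norm_norm, key, norm_div, norm_neg, div_le_iff₀ hFpos]
  nlinarith [norm_nonneg (w i)]

lemma EG.prod_range_div_succ (G : ℕ → ℂ) (hG : ∀ n, G n ≠ 0) (n : ℕ) :
    ∏ i ∈ Finset.range n, G i / G (i + 1) = G 0 / G n := by
  induction n with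
  | zero => rw [Finset.range_zero, Finset.prod_empty, div_self (hG 0)]
  | succ n ih =>
      rw [Finset.prod_range_succ, ih, div_mul_div_comm, mul_comm (G 0) (G n),
        mul_div_mul_left _ _ (hG n)]

/-- A helper product function. -/
def EG.g (q p x y : ℂ) (k j : ℕ) : ℂ :=
  (1 - q ^ j * p ^ (k + 1) * y) * (1 - q ^ j * p ^ k * x)

set_option maxHeartbeats 2000000 in
lemma EG.core {q p x y : ℂ} (hq : ‖q‖ < 1) (hp : ‖p‖ < 1)
    (hd : ∀ j k : ℕ, 1 - q ^ j * p ^ k * x ≠ 0)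
    (hn : ∀ j k : ℕ, 1 - q ^ j * p ^ (k + 1) * y ≠ 0) :
    (∏' pr : ℕ × ℕ, (1 - q ^ pr.1 * p ^ (pr.2 + 1) * y) / (1 - q ^ (pr.1 + 1) * p ^ pr.2 * x))
      = (∏' k : ℕ, (1 - p ^ (k + 1) * y) * (1 - p ^ k * x)) *
        ∏' pr : ℕ × ℕ, (1 - q ^ (pr.1 + 1) * p ^ (pr.2 + 1) * y) /
          (1 - q ^ pr.1 * p ^ pr.2 * x) := by
  have hgne : ∀ k j : ℕ, EG.g q p x y k j ≠ 0 := fun k j => mul_ne_zero (hn j k) (hd j k)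
  have sgeom : Summable fun pr : ℕ × ℕ => ‖q‖ ^ pr.1 * ‖p‖ ^ pr.2 :=
    Summable.mul_of_nonneg (summable_geometric_of_lt_one (norm_nonneg q) hq)
      (summable_geometric_of_lt_one (norm_nonneg p) hp)
      (fun _ => pow_nonneg (norm_nonneg q) _) (fun _ => pow_nonneg (norm_nonneg p) _)
  have wsum : ∀ (a b : ℕ) (c : ℂ),
      Summable fun pr : ℕ × ℕ => ‖-(q ^ (pr.1 + a) * p ^ (pr.2 + b) * c)‖ := by
    intro a b c
    refine (sgeom.mul_right (‖q‖ ^ a * ‖p‖ ^ b * ‖c‖)).congr fun pr => ?_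
    simp only [norm_neg, norm_mul, norm_pow, pow_add]
    ring
  have key : ∀ (a b : ℕ) (c : ℂ), (∀ j k : ℕ, 1 - q ^ (j + a) * p ^ (k + b) * c ≠ 0) →
      Multipliable (fun pr : ℕ × ℕ => 1 - q ^ (pr.1 + a) * p ^ (pr.2 + b) * c) ∧
      Multipliable (fun pr : ℕ × ℕ => (1 - q ^ (pr.1 + a) * p ^ (pr.2 + b) * c)⁻¹) := by
    intro a b c hne
    constructor
    · exact EG.mult_aux _ (fun pr : ℕ × ℕ => -(q ^ (pr.1 + a) * p ^ (pr.2 + b) * c))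
        (fun pr => by ring) (wsum a b c) (fun pr => hne pr.1 pr.2)
    · exact EG.mult_aux_inv _ (fun pr : ℕ × ℕ => -(q ^ (pr.1 + a) * p ^ (pr.2 + b) * c))
        (fun pr => by ring) (wsum a b c) (fun pr => hne pr.1 pr.2)
  have MN0 : Multipliable fun pr : ℕ × ℕ => 1 - q ^ pr.1 * p ^ (pr.2 + 1) * y :=
    ((key 0 1 y (fun j k => by simpa using hn j k)).1).congr fun pr => by norm_num
  have MD0 : Multipliable fun pr : ℕ × ℕ => 1 - q ^ pr.1 * p ^ pr.2 * x :=
    ((key 0 0 x (fun j k => by simpa using hd j k)).1).congr fun pr => by norm_num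
  have MD0i : Multipliable fun pr : ℕ × ℕ => (1 - q ^ pr.1 * p ^ pr.2 * x)⁻¹ :=
    ((key 0 0 x (fun j k => by simpa using hd j k)).2).congr fun pr => by norm_num
  have MN1 : Multipliable fun pr : ℕ × ℕ => 1 - q ^ (pr.1 + 1) * p ^ (pr.2 + 1) * y :=
    (key 1 1 y (fun j k => hn (j + 1) k)).1
  have MN1i : Multipliable fun pr : ℕ × ℕ => (1 - q ^ (pr.1 + 1) * p ^ (pr.2 + 1) * y)⁻¹ :=
    (key 1 1 y (fun j k => hn (j + 1) k)).2
  have MD1i : Multipliable fun pr : ℕ × ℕ => (1 - q ^ (pr.1 + 1) * p ^ pr.2 * x)⁻¹ :=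
    ((key 1 0 x (fun j k => by simpa using hd (j + 1) k)).2).congr fun pr => by norm_num
  have Mh : Multipliable fun pr : ℕ × ℕ =>
      EG.g q p x y pr.2 pr.1 / EG.g q p x y pr.2 (pr.1 + 1) := by
    refine ((MN0.mul MD0).mul (MN1i.mul MD1i)).congr fun pr => ?_
    simp only [EG.g]
    rw [div_eq_mul_inv, mul_inv]
  have MB : Multipliable fun pr : ℕ × ℕ =>
      (1 - q ^ (pr.1 + 1) * p ^ (pr.2 + 1) * y) / (1 - q ^ pr.1 * p ^ pr.2 * x) := by
    refine (MN1.mul MD0i).congr fun pr => ?_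
    rw [div_eq_mul_inv]
  have hsplit : ∀ pr : ℕ × ℕ,
      (1 - q ^ pr.1 * p ^ (pr.2 + 1) * y) / (1 - q ^ (pr.1 + 1) * p ^ pr.2 * x)
        = (EG.g q p x y pr.2 pr.1 / EG.g q p x y pr.2 (pr.1 + 1)) *
          ((1 - q ^ (pr.1 + 1) * p ^ (pr.2 + 1) * y) / (1 - q ^ pr.1 * p ^ pr.2 * x)) := by
    intro pr
    simp only [EG.g]
    rw [div_mul_div_comm, div_eq_div_iff (hd (pr.1 + 1) pr.2)
      (mul_ne_zero (mul_ne_zero (hn (pr.1 + 1) pr.2) (hd (pr.1 + 1) pr.2)) (hd pr.1 pr.2))]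
    ring
  rw [tprod_congr hsplit, Multipliable.tprod_mul Mh MB]
  congr 1
  have sgeom1 : Summable fun j : ℕ => ‖q‖ ^ j :=
    summable_geometric_of_lt_one (norm_nonneg q) hq
  have wsum1 : ∀ (a : ℕ) (c : ℂ), Summable fun j : ℕ => ‖-(q ^ (j + a) * c)‖ := by
    intro a c
    refine (sgeom1.mul_right (‖q‖ ^ a * ‖c‖)).congr fun j => ?_
    simp only [norm_neg, norm_mul, norm_pow, pow_add]
    ring
  have Mslice : ∀ k : ℕ, Multipliable fun j : ℕ =>
      EG.g q p x y k j / EG.g q p x y k (j + 1) := by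
    intro k
    have m1 : Multipliable fun j : ℕ => 1 - q ^ j * p ^ (k + 1) * y :=
      EG.mult_aux _ (fun j => -(q ^ (j + 0) * (p ^ (k + 1) * y)))
        (fun j => by ring) (wsum1 0 (p ^ (k + 1) * y)) (fun j => hn j k)
    have m2 : Multipliable fun j : ℕ => 1 - q ^ j * p ^ k * x :=
      EG.mult_aux _ (fun j => -(q ^ (j + 0) * (p ^ k * x)))
        (fun j => by ring) (wsum1 0 (p ^ k * x)) (fun j => hd j k)
    have m3 : Multipliable fun j : ℕ => (1 - q ^ (j + 1) * p ^ (k + 1) * y)⁻¹ :=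
      EG.mult_aux_inv _ (fun j => -(q ^ (j + 1) * (p ^ (k + 1) * y)))
        (fun j => by ring) (wsum1 1 (p ^ (k + 1) * y)) (fun j => hn (j + 1) k)
    have m4 : Multipliable fun j : ℕ => (1 - q ^ (j + 1) * p ^ k * x)⁻¹ :=
      EG.mult_aux_inv _ (fun j => -(q ^ (j + 1) * (p ^ k * x)))
        (fun j => by ring) (wsum1 1 (p ^ k * x)) (fun j => hd (j + 1) k)
    refine ((m1.mul m2).mul (m3.mul m4)).congr fun j => ?_
    simp only [EG.g]
    rw [div_eq_mul_inv, mul_inv]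
  have hswap : (∏' pr : ℕ × ℕ, EG.g q p x y pr.2 pr.1 / EG.g q p x y pr.2 (pr.1 + 1))
      = ∏' pr : ℕ × ℕ, EG.g q p x y pr.1 pr.2 / EG.g q p x y pr.1 (pr.2 + 1) :=
    (Equiv.prodComm ℕ ℕ).tprod_eq
      (fun pr : ℕ × ℕ => EG.g q p x y pr.1 pr.2 / EG.g q p x y pr.1 (pr.2 + 1))
  have Mhs : Multipliable fun pr : ℕ × ℕ =>
      EG.g q p x y pr.1 pr.2 / EG.g q p x y pr.1 (pr.2 + 1) := Mh.prod_symm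
  rw [hswap, Multipliable.tprod_prod' Mhs Mslice]
  refine tprod_congr fun k => ?_
  have Msl : Multipliable fun j : ℕ =>
      EG.g q p x y k j / EG.g q p x y k (j + 1) := Mslice k
  have hq0 : Filter.Tendsto (fun n : ℕ => q ^ n) Filter.atTop (nhds 0) :=
    tendsto_pow_atTop_nhds_zero_of_norm_lt_one hq
  have hg1 : Filter.Tendsto (fun n : ℕ => EG.g q p x y k n) Filter.atTop (nhds 1) := by
    have ha : Filter.Tendsto (fun n : ℕ => 1 - q ^ n * p ^ (k + 1) * y) Filter.atTop
        (nhds (1 - 0 * p ^ (k + 1) * y)) :=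
      Filter.Tendsto.sub tendsto_const_nhds ((hq0.mul_const (p ^ (k + 1))).mul_const y)
    have hb : Filter.Tendsto (fun n : ℕ => 1 - q ^ n * p ^ k * x) Filter.atTop
        (nhds (1 - 0 * p ^ k * x)) :=
      Filter.Tendsto.sub tendsto_const_nhds ((hq0.mul_const (p ^ k)).mul_const x)
    simpa [EG.g] using ha.mul hb
  have hconst : Filter.Tendsto (fun _ : ℕ => EG.g q p x y k 0) Filter.atTop
      (nhds (EG.g q p x y k 0)) := tendsto_const_nhds
  have h2 : Filter.Tendsto
      (fun n : ℕ => ∏ j ∈ Finset.range n, (EG.g q p x y k j / EG.g q p x y k (j + 1)))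
      Filter.atTop (nhds (EG.g q p x y k 0)) := by
    have hdiv := hconst.div hg1 one_ne_zero
    rw [div_one] at hdiv
    exact hdiv.congr fun n =>
      (EG.prod_range_div_succ (fun j => EG.g q p x y k j) (fun j => hgne k j) n).symm
  have hval := tendsto_nhds_unique (Msl.hasProd.tendsto_prod_nat) h2
  refine Eq.trans hval ?_
  simp [EG.g]

/-- Difference equation: Γ(z+τ,τ,σ) = θ₀(z,σ)·Γ(z,τ,σ). -/
theorem ellipticGamma_difference (z τ σ : ℂ) (hτ : 0 < τ.im) (hσ : 0 < σ.im)
    (hz : ∀ (j k : ℕ) (m : ℤ), z ≠ -(j : ℂ) * τ - (k : ℂ) * σ + (m : ℂ)) :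
    ellipticGamma (z + τ) τ σ = theta0 z σ * ellipticGamma z τ σ := by
  have hπ : (2 * (Real.pi : ℂ) * Complex.I) ≠ 0 := by
    simp [Real.pi_ne_zero, Complex.I_ne_zero, Complex.ofReal_ne_zero]
  set q : ℂ := Complex.exp (2 * (Real.pi : ℂ) * Complex.I * τ) with hq_def
  set p : ℂ := Complex.exp (2 * (Real.pi : ℂ) * Complex.I * σ) with hp_def
  set x : ℂ := Complex.exp (2 * (Real.pi : ℂ) * Complex.I * z) with hx_def
  set y : ℂ := Complex.exp (2 * (Real.pi : ℂ) * Complex.I * (-z)) with hy_def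
  have hnormlt : ∀ w : ℂ, 0 < w.im →
      ‖Complex.exp (2 * (Real.pi : ℂ) * Complex.I * w)‖ < 1 := by
    intro w hw
    rw [Complex.norm_exp]
    have hre : (2 * (Real.pi : ℂ) * Complex.I * w).re = -(2 * Real.pi * w.im) := by
      simp [Complex.mul_re, Complex.mul_im]
      try ring
    rw [hre, Real.exp_lt_one_iff]
    have := Real.pi_pos
    nlinarith
  have hqn : ‖q‖ < 1 := by rw [hq_def]; exact hnormlt τ hτ
  have hpn : ‖p‖ < 1 := by rw [hp_def]; exact hnormlt σ hσ
  have hexp : ∀ (a b : ℕ) (c : ℂ),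
      Complex.exp (2 * (Real.pi : ℂ) * Complex.I * ((a : ℂ) * τ + (b : ℂ) * σ + c))
        = q ^ a * p ^ b * Complex.exp (2 * (Real.pi : ℂ) * Complex.I * c) := by
    intro a b c
    rw [hq_def, hp_def, ← Complex.exp_nat_mul, ← Complex.exp_nat_mul, ← Complex.exp_add,
      ← Complex.exp_add]
    congr 1
    ring
  have hexpσ : ∀ (b : ℕ) (c : ℂ),
      Complex.exp (2 * (Real.pi : ℂ) * Complex.I * ((b : ℂ) * σ + c))
        = p ^ b * Complex.exp (2 * (Real.pi : ℂ) * Complex.I * c) := by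
    intro b c
    rw [hp_def, ← Complex.exp_nat_mul, ← Complex.exp_add]
    congr 1
    ring
  have hd : ∀ j k : ℕ, 1 - q ^ j * p ^ k * x ≠ 0 := by
    intro j k h
    have h1 : Complex.exp (2 * (Real.pi : ℂ) * Complex.I * ((j : ℂ) * τ + (k : ℂ) * σ + z))
        = 1 := by
      rw [hexp j k z, ← hx_def]
      exact (sub_eq_zero.mp h).symm
    obtain ⟨m, hm⟩ := Complex.exp_eq_one_iff.mp h1
    rw [mul_comm (m : ℂ)] at hm
    have h2 : (j : ℂ) * τ + (k : ℂ) * σ + z = m := mul_left_cancel₀ hπ hm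
    exact hz j k m (by linear_combination h2)
  by_cases hP : ∀ j k : ℕ, 1 - q ^ j * p ^ (k + 1) * y ≠ 0
  · have h1 : ellipticGamma (z + τ) τ σ
        = ∏' pr : ℕ × ℕ, (1 - q ^ pr.1 * p ^ (pr.2 + 1) * y) /
            (1 - q ^ (pr.1 + 1) * p ^ pr.2 * x) := by
      rw [ellipticGamma]
      refine tprod_congr fun pr => ?_
      congr 1
      · have harg : 2 * (Real.pi : ℂ) * Complex.I *
            (((pr.1 : ℂ) + 1) * τ + ((pr.2 : ℂ) + 1) * σ - (z + τ))
            = 2 * (Real.pi : ℂ) * Complex.I *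
              (((pr.1 : ℕ) : ℂ) * τ + (((pr.2 + 1 : ℕ)) : ℂ) * σ + (-z)) := by
          push_cast
          ring
        rw [harg, hexp pr.1 (pr.2 + 1) (-z), ← hy_def]
      · have harg : 2 * (Real.pi : ℂ) * Complex.I *
            ((pr.1 : ℂ) * τ + (pr.2 : ℂ) * σ + (z + τ))
            = 2 * (Real.pi : ℂ) * Complex.I *
              ((((pr.1 + 1 : ℕ)) : ℂ) * τ + ((pr.2 : ℕ) : ℂ) * σ + z) := by
          push_cast
          ring
        rw [harg, hexp (pr.1 + 1) pr.2 z, ← hx_def]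
    have h2 : theta0 z σ = ∏' k : ℕ, (1 - p ^ (k + 1) * y) * (1 - p ^ k * x) := by
      rw [theta0]
      refine tprod_congr fun k => ?_
      congr 1
      · have harg : 2 * (Real.pi : ℂ) * Complex.I * (((k : ℂ) + 1) * σ - z)
            = 2 * (Real.pi : ℂ) * Complex.I * ((((k + 1 : ℕ)) : ℂ) * σ + (-z)) := by
          push_cast
          ring
        rw [harg, hexpσ (k + 1) (-z), ← hy_def]
      · rw [hexpσ k z, ← hx_def]
    have h3 : ellipticGamma z τ σ
        = ∏' pr : ℕ × ℕ, (1 - q ^ (pr.1 + 1) * p ^ (pr.2 + 1) * y) /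
            (1 - q ^ pr.1 * p ^ pr.2 * x) := by
      rw [ellipticGamma]
      refine tprod_congr fun pr => ?_
      congr 1
      · have harg : 2 * (Real.pi : ℂ) * Complex.I *
            (((pr.1 : ℂ) + 1) * τ + ((pr.2 : ℂ) + 1) * σ - z)
            = 2 * (Real.pi : ℂ) * Complex.I *
              ((((pr.1 + 1 : ℕ)) : ℂ) * τ + (((pr.2 + 1 : ℕ)) : ℂ) * σ + (-z)) := by
          push_cast
          ring
        rw [harg, hexp (pr.1 + 1) (pr.2 + 1) (-z), ← hy_def]
      · rw [hexp pr.1 pr.2 z, ← hx_def]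
    rw [h1, h2, h3]
    exact EG.core hqn hpn hd hP
  · push_neg at hP
    obtain ⟨j, k, hjk⟩ := hP
    have hL : ellipticGamma (z + τ) τ σ = 0 := by
      rw [ellipticGamma]
      apply EG.tprod_eq_zero _ (j, k)
      have harg : 2 * (Real.pi : ℂ) * Complex.I *
          (((j : ℂ) + 1) * τ + ((k : ℂ) + 1) * σ - (z + τ))
          = 2 * (Real.pi : ℂ) * Complex.I *
            (((j : ℕ) : ℂ) * τ + (((k + 1 : ℕ)) : ℂ) * σ + (-z)) := by
        push_cast
        ring
      show (1 - Complex.exp (2 * (Real.pi : ℂ) * Complex.I *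
          (((j : ℂ) + 1) * τ + ((k : ℂ) + 1) * σ - (z + τ)))) /
          (1 - Complex.exp (2 * (Real.pi : ℂ) * Complex.I *
          ((j : ℂ) * τ + (k : ℂ) * σ + (z + τ)))) = 0
      rw [harg, hexp j (k + 1) (-z), ← hy_def, hjk, zero_div]
    rw [hL]
    rcases j with _ | j'
    · have hθ : theta0 z σ = 0 := by
        rw [theta0]
        apply EG.tprod_eq_zero _ k
        have harg : 2 * (Real.pi : ℂ) * Complex.I * (((k : ℂ) + 1) * σ - z)
            = 2 * (Real.pi : ℂ) * Complex.I * ((((k + 1 : ℕ)) : ℂ) * σ + (-z)) := by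
          push_cast
          ring
        show (1 - Complex.exp (2 * (Real.pi : ℂ) * Complex.I * (((k : ℂ) + 1) * σ - z))) *
            (1 - Complex.exp (2 * (Real.pi : ℂ) * Complex.I * ((k : ℂ) * σ + z))) = 0
        rw [harg, hexpσ (k + 1) (-z), ← hy_def]
        have : (1 : ℂ) - p ^ (k + 1) * y = 0 := by simpa using hjk
        rw [this, zero_mul]
      rw [hθ, zero_mul]
    · have hΓ : ellipticGamma z τ σ = 0 := by
        rw [ellipticGamma]
        apply EG.tprod_eq_zero _ (j', k)
        have harg : 2 * (Real.pi : ℂ) * Complex.I *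
            (((j' : ℂ) + 1) * τ + ((k : ℂ) + 1) * σ - z)
            = 2 * (Real.pi : ℂ) * Complex.I *
              ((((j' + 1 : ℕ)) : ℂ) * τ + (((k + 1 : ℕ)) : ℂ) * σ + (-z)) := by
          push_cast
          ring
        show (1 - Complex.exp (2 * (Real.pi : ℂ) * Complex.I *
            (((j' : ℂ) + 1) * τ + ((k : ℂ) + 1) * σ - z))) /
            (1 - Complex.exp (2 * (Real.pi : ℂ) * Complex.I *
            ((j' : ℂ) * τ + (k : ℂ) * σ + z))) = 0
        rw [harg, hexp (j' + 1) (k + 1) (-z), ← hy_def]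
        have : (1 : ℂ) - q ^ (j' + 1) * p ^ (k + 1) * y = 0 := by
          have := hjk
          push_cast at this ⊢
          convert this using 3
        rw [this, zero_div]
      rw [hΓ, mul_zero]
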